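/- For every δ ∈ (0,1) and every integer K ≥ 1, P(∃ s ∈ ℕ, s ≥ 1, such that μ̂_s ≤ μ and kl(μ̂_s, μ) > log(2Ks²/δ)/s) ≤ δ/K. -/

import Mathlib

open MeasureTheory Real Set
open scoped ENNReal NNReal

/-- For every `δ ∈ (0,1)` and every integer `K ≥ 1`,
`P(∃ s ≥ 1, μ̂ₛ ≤ μ ∧ kl (μ̂ₛ, μ) > log (2Ks²/δ) / s) ≤ δ / K`. -/
theorem prob_ucb_deviation_le
    (ρ : Measure ℝ) [SigmaFinite ρ]
    (Θ : Set ℝ) (hΘ : Θ = {θ : ℝ | Integrable (fun x => exp (θ * x)) ρ})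
    (b b' b'' : ℝ → ℝ)
    (hb : ∀ θ ∈ Θ, b θ = log (∫ x, exp (θ * x) ∂ρ))
    (hb' : ∀ θ ∈ interior Θ, HasDerivAt b (b' θ) θ)
    (hb'' : ∀ θ ∈ interior Θ, HasDerivAt b' (b'' θ) θ)
    (hbpos : ∀ θ ∈ interior Θ, 0 < b'' θ)
    (Iset : Set ℝ) (hI : Iset = b' '' (interior Θ))
    (kl : ℝ → ℝ → ℝ)
    (hkl : ∀ θ ∈ interior Θ, ∀ θ' ∈ interior Θ,
      kl (b' θ) (b' θ') = b θ' - b θ - b' θ * (θ' - θ))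
    (hklcont : ∀ μ' ∈ Iset, ContinuousOn (fun x => kl x μ') (closure Iset))
    (θ : ℝ) (hθ : θ ∈ interior Θ)
    (ν : Measure ℝ) (hν : ν = ρ.withDensity (fun x => ENNReal.ofReal (exp (θ * x - b θ))))
    (hsupp : ν (closure Iset)ᶜ = 0)
    (μ : ℝ) (hμ : μ = b' θ)
    (Ω : Type*) [MeasurableSpace Ω] (P : Measure Ω) [IsProbabilityMeasure P]
    (X : ℕ → Ω → ℝ) (hXmeas : ∀ i, Measurable (X i))
    (hXlaw : ∀ i, Measure.map (X i) P = ν)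
    (hXindep : ProbabilityTheory.iIndepFun X P)
    (μhat : ℕ → Ω → ℝ) (hμhat : ∀ s ω, μhat s ω = (∑ i ∈ Finset.range s, X i ω) / s)
    (δ : ℝ) (hδ : δ ∈ Set.Ioo (0 : ℝ) 1) (K : ℕ) (hK : 1 ≤ K) :
    P {ω | ∃ s : ℕ, 1 ≤ s ∧ μhat s ω ≤ μ ∧
        log (2 * K * (s : ℝ) ^ 2 / δ) / s < kl (μhat s ω) μ} ≤
      ENNReal.ofReal (δ / K) := by
  obtain ⟨hδ0, hδ1⟩ := hδ
  have hθΘ : θ ∈ Θ := interior_subset hθ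
  have hνprob : IsProbabilityMeasure ν := by
    rw [← hXlaw 0]; exact Measure.isProbabilityMeasure_map (hXmeas 0).aemeasurable
  have hρne : ρ ≠ 0 := by
    intro h
    have h1 : ν Set.univ = 1 := measure_univ
    rw [hν, h] at h1
    simp [MeasureTheory.lintegral_zero_measure] at h1
  have hintΘ : ∀ η ∈ Θ, Integrable (fun x => exp (η * x)) ρ := by
    intro η hη; rw [hΘ] at hη; exact hη
  have hpos : ∀ η ∈ Θ, 0 < ∫ x, exp (η * x) ∂ρ := by
    intro η hη
    rw [integral_pos_iff_support_of_nonneg (fun x => (exp_pos _).le) (hintΘ η hη)]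
    have hsup : Function.support (fun x : ℝ => exp (η * x)) = Set.univ := by
      ext x; simp [Function.mem_support, (exp_pos (η * x)).ne']
    rw [hsup]
    exact Measure.measure_univ_pos.mpr hρne
  have hexpb : ∀ η ∈ Θ, exp (b η) = ∫ x, exp (η * x) ∂ρ := by
    intro η hη; rw [hb η hη, exp_log (hpos η hη)]
  -- convexity of Θ
  have hconvΘ : Convex ℝ Θ := by
    rw [hΘ]
    intro θ₁ h₁ θ₂ h₂ a c ha hc hac
    simp only [Set.mem_setOf_eq] at h₁ h₂ ⊢
    have hint : Integrable (fun x => a * exp (θ₁ * x) + c * exp (θ₂ * x)) ρ :=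
      (h₁.const_mul a).add (h₂.const_mul c)
    refine hint.mono ?_ (Filter.Eventually.of_forall fun x => ?_)
    · exact Continuous.aestronglyMeasurable (by continuity)
    · rw [norm_of_nonneg (exp_pos _).le]
      have hgm := Real.geom_mean_le_arith_mean2_weighted ha hc (exp_pos (θ₁ * x)).le
        (exp_pos (θ₂ * x)).le hac
      calc exp ((a • θ₁ + c • θ₂) * x) = exp (θ₁ * x) ^ a * exp (θ₂ * x) ^ c := by
            rw [← Real.exp_mul, ← Real.exp_mul, ← Real.exp_add]
            simp only [smul_eq_mul]; ring_nf
        _ ≤ a * exp (θ₁ * x) + c * exp (θ₂ * x) := hgm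
        _ ≤ ‖a * exp (θ₁ * x) + c * exp (θ₂ * x)‖ := le_abs_self _
  have hconvInt : Convex ℝ (interior Θ) := hconvΘ.interior
  have hordInt : OrdConnected (interior Θ) := hconvInt.ordConnected
  -- b' strictly monotone on interior Θ
  have hb'mono : StrictMonoOn b' (interior Θ) := by
    apply strictMonoOn_of_deriv_pos hconvInt
    · exact fun x hx => ((hb'' x hx).continuousAt).continuousWithinAt
    · intro x hx
      rw [interior_interior] at hx
      rw [(hb'' x hx).deriv]
      exact hbpos x hx
  -- Iset properties
  have hμI : μ ∈ Iset := by rw [hI, hμ]; exact ⟨θ, hθ, rfl⟩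
  have hIord : OrdConnected Iset := by
    rw [hI]
    refine IsPreconnected.ordConnected ?_
    exact (hconvInt.isPreconnected).image b'
      (fun x hx => ((hb'' x hx).continuousAt).continuousWithinAt)
  have hIconv : Convex ℝ Iset := convex_iff_ordConnected.mpr hIord
  -- a.e., each X i lies in closure Iset, hence so does every empirical mean
  have hXi : ∀ i, ∀ᵐ ω ∂P, X i ω ∈ closure Iset := by
    intro i
    have hpre : P (X i ⁻¹' (closure Iset)ᶜ) = 0 := by
      rw [← Measure.map_apply (hXmeas i) isClosed_closure.measurableSet.compl, hXlaw i]
      exact hsupp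
    rw [ae_iff]
    convert hpre using 2
    rfl
  have hclos : ∀ s : ℕ, 1 ≤ s → ∀ᵐ ω ∂P, μhat s ω ∈ closure Iset := by
    intro s hs
    have hball : ∀ᵐ ω ∂P, ∀ i ∈ Finset.range s, X i ω ∈ closure Iset :=
      (ae_ball_iff (Finset.range s).countable_toSet).mpr fun i _ => hXi i
    filter_upwards [hball] with ω hω
    rw [hμhat]
    have hsne : (s : ℝ) ≠ 0 := Nat.cast_ne_zero.mpr (by omega)
    have hmem := (hIconv.closure).sum_mem (t := Finset.range s)
      (w := fun _ => (s : ℝ)⁻¹) (z := fun i => X i ω)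
      (fun i _ => by positivity)
      (by simp [Finset.sum_const, Finset.card_range, nsmul_eq_mul,
            mul_inv_cancel₀ hsne])
      (fun i hi => hω i hi)
    have : ∑ i ∈ Finset.range s, (s : ℝ)⁻¹ • X i ω
        = (∑ i ∈ Finset.range s, X i ω) / s := by
      simp only [smul_eq_mul, ← Finset.mul_sum, div_eq_inv_mul]
    rwa [this] at hmem
  -- integrability and integral of the tilted exponential under ν
  have hνint : ∀ η ∈ Θ, Integrable (fun x => exp ((η - θ) * x)) ν := by
    intro η hη
    have hfm : Measurable fun x => (exp (θ * x - b θ)).toNNReal :=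
      (Measurable.sub (measurable_const.mul measurable_id) measurable_const).exp.real_toNNReal
    have hν' : ν = ρ.withDensity (fun x => ((exp (θ * x - b θ)).toNNReal : ENNReal)) := by
      rw [hν]; rfl
    rw [hν', integrable_withDensity_iff_integrable_smul hfm]
    have hkey : (fun x => (exp (θ * x - b θ)).toNNReal • exp ((η - θ) * x))
        = fun x => exp (-(b θ)) * exp (η * x) := by
      funext x
      simp only [NNReal.smul_def, Real.coe_toNNReal _ (exp_pos _).le, smul_eq_mul]
      rw [← Real.exp_add, ← Real.exp_add]
      congr 1; ring
    rw [hkey]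
    exact (hintΘ η hη).const_mul _
  have hνeq : ∀ η ∈ Θ, ∫ x, exp ((η - θ) * x) ∂ν = exp (b η - b θ) := by
    intro η hη
    have hfm : Measurable fun x => (exp (θ * x - b θ)).toNNReal :=
      (Measurable.sub (measurable_const.mul measurable_id) measurable_const).exp.real_toNNReal
    have hν' : ν = ρ.withDensity (fun x => ((exp (θ * x - b θ)).toNNReal : ENNReal)) := by
      rw [hν]; rfl
    rw [hν', integral_withDensity_eq_integral_smul hfm]
    have hkey : (fun x => (exp (θ * x - b θ)).toNNReal • exp ((η - θ) * x))
        = fun x => exp (-(b θ)) * exp (η * x) := by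
      funext x
      simp only [NNReal.smul_def, Real.coe_toNNReal _ (exp_pos _).le, smul_eq_mul]
      rw [← Real.exp_add, ← Real.exp_add]
      congr 1; ring
    rw [hkey, integral_const_mul, ← hexpb η hη, ← Real.exp_add]
    ring_nf
  -- integrability and mgf of each X i
  have hexpmeas : ∀ t : ℝ, Continuous (fun x : ℝ => exp (t * x)) := by
    intro t
    exact Real.continuous_exp.comp (continuous_const.mul continuous_id)
  have hmgfint : ∀ η ∈ Θ, ∀ i : ℕ, Integrable (fun ω => exp ((η - θ) * X i ω)) P := by
    intro η hη i
    have h1 : Integrable (fun x => exp ((η - θ) * x)) (Measure.map (X i) P) := by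
      rw [hXlaw i]; exact hνint η hη
    exact (integrable_map_measure ((hexpmeas _).aestronglyMeasurable)
      (hXmeas i).aemeasurable).mp h1
  have hmgf : ∀ η ∈ Θ, ∀ i : ℕ,
      ProbabilityTheory.mgf (X i) P (η - θ) = exp (b η - b θ) := by
    intro η hη i
    have h1 : ProbabilityTheory.mgf (X i) P (η - θ)
        = ∫ x, exp ((η - θ) * x) ∂(Measure.map (X i) P) := by
      rw [integral_map (hXmeas i).aemeasurable ((hexpmeas _).aestronglyMeasurable)]
      rfl
    rw [h1, hXlaw i, hνeq η hη]
  -- Chernoff bound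
  have chern : ∀ s : ℕ, 1 ≤ s → ∀ η ∈ interior Θ, η ≤ θ →
      (P {ω | μhat s ω ≤ b' η}).toReal
        ≤ exp (-(s : ℝ) * (b θ - b η - b' η * (θ - η))) := by
    intro s hs η hη hηθ
    have hηΘ : η ∈ Θ := interior_subset hη
    have htle : η - θ ≤ 0 := sub_nonpos.mpr hηθ
    have hspos : (0 : ℝ) < s := by exact_mod_cast Nat.lt_of_lt_of_le Nat.zero_lt_one hs
    have hint : ∀ i ∈ Finset.range s, Integrable (fun ω => exp ((η - θ) * X i ω)) P :=
      fun i _ => hmgfint η hηΘ i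
    have H := ProbabilityTheory.measure_le_le_exp_mul_mgf (μ := P)
      (X := ∑ i ∈ Finset.range s, X i) ((s : ℝ) * b' η) htle
      (hXindep.integrable_exp_mul_sum hXmeas hint)
    rw [hXindep.mgf_sum hXmeas] at H
    have hset : {ω | μhat s ω ≤ b' η}
        = {ω | (∑ i ∈ Finset.range s, X i) ω ≤ (s : ℝ) * b' η} := by
      ext ω
      simp only [Set.mem_setOf_eq, hμhat, Finset.sum_apply]
      rw [div_le_iff₀ hspos, mul_comm]
    rw [hset]
    refine H.trans (le_of_eq ?_)
    have hprod : ∏ i ∈ Finset.range s, ProbabilityTheory.mgf (X i) P (η - θ)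
        = exp (b η - b θ) ^ s := by
      rw [Finset.prod_congr rfl fun i _ => hmgf η hηΘ i, Finset.prod_const,
        Finset.card_range]
    rw [hprod, ← Real.exp_nat_mul, ← Real.exp_add]
    congr 1; ring
  -- the function g and its properties
  set g : ℝ → ℝ := fun x => b θ - b x - b' x * (θ - x) with hg
  have hgderiv : ∀ x ∈ interior Θ, HasDerivAt g (-(b'' x * (θ - x))) x := by
    intro x hx
    have h1 : HasDerivAt (fun y => b θ - b y) (0 - b' x) x :=
      (hasDerivAt_const x (b θ)).sub (hb' x hx)
    have h2 : HasDerivAt (fun y => b' y * (θ - y))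
        (b'' x * (θ - x) + b' x * (0 - 1)) x :=
      (hb'' x hx).mul ((hasDerivAt_const x θ).sub (hasDerivAt_id x))
    have h3 : HasDerivAt (fun y => b θ - b y - b' y * (θ - y))
        (0 - b' x - (b'' x * (θ - x) + b' x * (0 - 1))) x := h1.sub h2
    convert h3 using 1
    ring
  have hintsub : interior (interior Θ ∩ Iic θ) ⊆ interior Θ ∩ Iio θ := by
    rw [interior_inter, interior_interior, interior_Iic]
  have hganti : AntitoneOn g (interior Θ ∩ Iic θ) := by
    apply antitoneOn_of_deriv_nonpos (hconvInt.inter (convex_Iic θ))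
    · exact fun x hx => ((hgderiv x hx.1).continuousAt).continuousWithinAt
    · intro x hx
      exact ((hgderiv x (hintsub hx).1).differentiableAt).differentiableWithinAt
    · intro x hx
      obtain ⟨hx1, hx2⟩ := hintsub hx
      rw [(hgderiv x hx1).deriv]
      have h1 := hbpos x hx1
      have h2 : x < θ := hx2
      nlinarith
  have hgθ : g θ = 0 := by simp [hg]
  have hklg : ∀ η ∈ interior Θ, kl (b' η) μ = g η := by
    intro η hη
    rw [hμ, hkl η hη θ hθ]
  -- per-s bound
  have key : ∀ s : ℕ,
      P {ω | 1 ≤ s ∧ μhat s ω ≤ μ ∧ log (2 * K * (s : ℝ) ^ 2 / δ) / s < kl (μhat s ω) μ}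
        ≤ ENNReal.ofReal (δ / (2 * K * (s : ℝ) ^ 2)) := by
    intro s
    rcases Nat.eq_zero_or_pos s with rfl | hs
    · simp
    have hspos : (0 : ℝ) < s := by exact_mod_cast hs
    have hKpos : (0 : ℝ) < K := by exact_mod_cast hK
    set c := log (2 * K * (s : ℝ) ^ 2 / δ) / s with hc_def
    have hRpos : (0 : ℝ) < 2 * K * (s : ℝ) ^ 2 / δ := by positivity
    have hratio : (1 : ℝ) < 2 * K * (s : ℝ) ^ 2 / δ := by
      rw [lt_div_iff₀ hδ0, one_mul]
      have hK1 : (1 : ℝ) ≤ (K : ℝ) := by exact_mod_cast hK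
      have hs1 : (1 : ℝ) ≤ (s : ℝ) := by exact_mod_cast hs
      have h2 : (1 : ℝ) ≤ (s : ℝ) ^ 2 := by nlinarith
      have h3 : (1 : ℝ) * 1 ≤ (K : ℝ) * (s : ℝ) ^ 2 :=
        mul_le_mul hK1 h2 zero_le_one (le_trans zero_le_one hK1)
      nlinarith
    have hc : 0 < c := div_pos (log_pos hratio) hspos
    have hexpc : exp (-(s : ℝ) * c) = δ / (2 * K * (s : ℝ) ^ 2) := by
      have h1 : -(s : ℝ) * c = -log (2 * K * (s : ℝ) ^ 2 / δ) := by
        rw [hc_def]; field_simp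
      rw [h1, Real.exp_neg, Real.exp_log hRpos, inv_div]
    -- null complement of closure-membership
    have hnull : P {ω | μhat s ω ∉ closure Iset} = 0 := by
      have := hclos s hs
      rw [ae_iff] at this
      exact this
    by_cases HS : ∃ η ∈ interior Θ, η ≤ θ ∧ c ≤ g η
    · -- Case 1: Chernoff bound applies
      obtain ⟨η₀, hη₀, hη₀θ, hgη₀⟩ := HS
      have hIcc : Icc η₀ θ ⊆ interior Θ := hordInt.out hη₀ hθ
      have hcontg : ContinuousOn g (Icc η₀ θ) :=
        fun x hx => ((hgderiv x (hIcc hx)).continuousAt).continuousWithinAt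
      have hmem : c ∈ Icc (g θ) (g η₀) := ⟨hgθ ▸ hc.le, hgη₀⟩
      obtain ⟨η, hηIcc, hgη⟩ := intermediate_value_Icc' hη₀θ hcontg hmem
      have hηI : η ∈ interior Θ := hIcc hηIcc
      have hηθ : η ≤ θ := hηIcc.2
      have hb'ηI : b' η ∈ Iset := by rw [hI]; exact ⟨η, hηI, rfl⟩
      -- event inclusion
      have hsub : {ω | 1 ≤ s ∧ μhat s ω ≤ μ ∧
            log (2 * K * (s : ℝ) ^ 2 / δ) / s < kl (μhat s ω) μ}
          ⊆ {ω | μhat s ω ≤ b' η} ∪ {ω | μhat s ω ∉ closure Iset} := by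
        rintro ω ⟨-, hle, hklgt⟩
        by_cases hcl : μhat s ω ∈ closure Iset
        · left
          by_contra hgt
          simp only [Set.mem_setOf_eq, not_le] at hgt
          have hμhatI : μhat s ω ∈ Iset := hIord.out hb'ηI hμI ⟨hgt.le, hle⟩
          rw [hI] at hμhatI
          obtain ⟨η', hη', hη'eq⟩ := hμhatI
          have hη'θ : η' ≤ θ := by
            refine (hb'mono.le_iff_le hη' hθ).mp ?_
            rw [hη'eq, ← hμ]; exact hle
          have hηη' : η < η' := by
            refine (hb'mono.lt_iff_lt hηI hη').mp ?_
            rw [hη'eq]; exact hgt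
          have h1 : kl (μhat s ω) μ = g η' := by rw [← hη'eq]; exact hklg η' hη'
          have h2 : g η' ≤ g η := hganti ⟨hηI, hηθ⟩ ⟨hη', hη'θ⟩ hηη'.le
          rw [h1] at hklgt
          rw [hgη] at h2
          exact absurd hklgt (not_lt.mpr h2)
        · right; exact hcl
      calc P {ω | 1 ≤ s ∧ μhat s ω ≤ μ ∧
            log (2 * K * (s : ℝ) ^ 2 / δ) / s < kl (μhat s ω) μ}
          ≤ P ({ω | μhat s ω ≤ b' η} ∪ {ω | μhat s ω ∉ closure Iset}) :=
            measure_mono hsub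
        _ ≤ P {ω | μhat s ω ≤ b' η} + P {ω | μhat s ω ∉ closure Iset} :=
            measure_union_le _ _
        _ = P {ω | μhat s ω ≤ b' η} := by rw [hnull, add_zero]
        _ ≤ ENNReal.ofReal (δ / (2 * K * (s : ℝ) ^ 2)) := by
            have h1 := chern s hs η hηI hηθ
            have h2 : b θ - b η - b' η * (θ - η) = c := hgη
            rw [h2, hexpc] at h1
            rw [← ENNReal.ofReal_toReal (measure_ne_top P _)]
            exact ENNReal.ofReal_le_ofReal h1
    · -- Case 2: the event is a.e. empty
      have hempty : {ω | 1 ≤ s ∧ μhat s ω ≤ μ ∧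
            log (2 * K * (s : ℝ) ^ 2 / δ) / s < kl (μhat s ω) μ}
          ⊆ {ω | μhat s ω ∉ closure Iset} := by
        rintro ω ⟨-, hle, hklgt⟩ hcl
        rcases eq_or_lt_of_le hle with heq | hlt
        · have h0 : kl μ μ = 0 := by
            have := hklg θ hθ
            rw [← hμ] at this
            rw [this, hgθ]
          rw [heq, h0] at hklgt
          exact absurd hklgt (not_lt.mpr hc.le)
        · have hcw : ContinuousWithinAt (fun x => kl x μ) (closure Iset) (μhat s ω) :=
            (hklcont μ hμI) _ hcl
          have hev : ∀ᶠ x in nhdsWithin (μhat s ω) (closure Iset), c < kl x μ :=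
            hcw.eventually (eventually_gt_nhds hklgt)
          have hne : (nhdsWithin (μhat s ω) (Iset ∩ Iio μ)).NeBot := by
            rw [← mem_closure_iff_nhdsWithin_neBot]
            have h1 : μhat s ω ∈ Iio μ ∩ closure Iset := ⟨hlt, hcl⟩
            have h2 := (isOpen_Iio (a := μ)).inter_closure (t := Iset)
            have h3 := h2 h1
            rwa [Set.inter_comm] at h3
          have hev' : ∀ᶠ x in nhdsWithin (μhat s ω) (Iset ∩ Iio μ), c < kl x μ :=
            hev.filter_mono (nhdsWithin_mono _ (fun x hx => subset_closure hx.1))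
          have hev'' : ∀ᶠ x in nhdsWithin (μhat s ω) (Iset ∩ Iio μ),
              x ∈ Iset ∩ Iio μ := eventually_mem_nhdsWithin
          obtain ⟨x, hxgt, hxI, hxlt⟩ := (hev'.and hev'').exists
          rw [hI] at hxI
          obtain ⟨η', hη', rfl⟩ := hxI
          have hη'θ : η' < θ := by
            refine (hb'mono.lt_iff_lt hη' hθ).mp ?_
            rw [← hμ]; exact hxlt
          refine HS ⟨η', hη', hη'θ.le, ?_⟩
          rw [← hklg η' hη']
          exact hxgt.le
      calc P {ω | 1 ≤ s ∧ μhat s ω ≤ μ ∧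
            log (2 * K * (s : ℝ) ^ 2 / δ) / s < kl (μhat s ω) μ}
          ≤ P {ω | μhat s ω ∉ closure Iset} := measure_mono hempty
        _ = 0 := hnull
        _ ≤ ENNReal.ofReal (δ / (2 * K * (s : ℝ) ^ 2)) := zero_le
  -- union bound and summation
  have hKpos : (0 : ℝ) < K := by exact_mod_cast hK
  have hE : {ω | ∃ s : ℕ, 1 ≤ s ∧ μhat s ω ≤ μ ∧
        log (2 * K * (s : ℝ) ^ 2 / δ) / s < kl (μhat s ω) μ}
      = ⋃ s : ℕ, {ω | 1 ≤ s ∧ μhat s ω ≤ μ ∧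
        log (2 * K * (s : ℝ) ^ 2 / δ) / s < kl (μhat s ω) μ} := by
    ext ω
    simp only [Set.mem_setOf_eq, Set.mem_iUnion]
  rw [hE]
  have hsummable : Summable (fun n : ℕ => (1 : ℝ) / (n : ℝ) ^ 2) := hasSum_zeta_two.summable
  calc P (⋃ s : ℕ, {ω | 1 ≤ s ∧ μhat s ω ≤ μ ∧
        log (2 * K * (s : ℝ) ^ 2 / δ) / s < kl (μhat s ω) μ})
      ≤ ∑' s : ℕ, P {ω | 1 ≤ s ∧ μhat s ω ≤ μ ∧
        log (2 * K * (s : ℝ) ^ 2 / δ) / s < kl (μhat s ω) μ} := measure_iUnion_le _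
    _ ≤ ∑' s : ℕ, ENNReal.ofReal (δ / (2 * K * (s : ℝ) ^ 2)) := ENNReal.tsum_le_tsum key
    _ = ∑' s : ℕ, ENNReal.ofReal (δ / (2 * K)) * ENNReal.ofReal (1 / (s : ℝ) ^ 2) := by
        refine tsum_congr fun s => ?_
        rw [← ENNReal.ofReal_mul (by positivity)]
        congr 1
        rw [div_mul_div_comm, mul_one, mul_assoc]
    _ = ENNReal.ofReal (δ / (2 * K)) * ∑' s : ℕ, ENNReal.ofReal (1 / (s : ℝ) ^ 2) :=
        ENNReal.tsum_mul_left
    _ ≤ ENNReal.ofReal (δ / (2 * K)) * ENNReal.ofReal 2 := by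
        refine mul_le_mul_right ?_ _
        rw [← ENNReal.ofReal_tsum_of_nonneg (fun n => by positivity) hsummable]
        refine ENNReal.ofReal_le_ofReal ?_
        rw [hasSum_zeta_two.tsum_eq]
        nlinarith [Real.pi_lt_d2, Real.pi_gt_three]
    _ = ENNReal.ofReal (δ / K) := by
        rw [← ENNReal.ofReal_mul (by positivity)]
        congr 1
        field_simp
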